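/- For all n ≥ 2, the maximum number of 2-edges in a 2-graph H ⊆ 2(n,2) that does not contain a 3-copy of the triangle is exactly 4·⌊n²/4⌋. That is, ex(n, C₃, 2) = 4·⌊n²/4⌋. -/

import Mathlib

open Finset

/-- The support of a vector: indices of nonzero entries. -/
def qsupport {n : ℕ} (x : Fin n → ℕ) : Finset (Fin n) :=
  Finset.univ.filter (fun i => x i ≠ 0)

/-- `Qset q n` : all q-edges, i.e. vectors in `{0,…,q}^n` with exactly two nonzero entries. -/
def Qset (q n : ℕ) : Finset (Fin n → ℕ) :=
  ((Finset.univ : Finset (Fin n → Fin (q+1))).image (fun f i => (f i : ℕ))).filter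
    (fun x => (qsupport x).card = 2)

/-- The q-edge with support `{i,j}`, value `a` at `i` and `b` at `j`. -/
def qedge {n : ℕ} (i j : Fin n) (a b : ℕ) : Fin n → ℕ :=
  fun k => if k = i then a else if k = j then b else 0

lemma qedge_self {n : ℕ} (i j : Fin n) (a b : ℕ) : qedge i j a b i = a := by simp [qedge]

lemma qedge_snd {n : ℕ} {i j : Fin n} (h : i ≠ j) (a b : ℕ) : qedge i j a b j = b := by
  simp [qedge, h.symm]

lemma qedge_other {n : ℕ} {i j k : Fin n} (hi : k ≠ i) (hj : k ≠ j) (a b : ℕ) :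
    qedge i j a b k = 0 := by simp [qedge, hi, hj]

lemma qedge_comm {n : ℕ} {i j : Fin n} (h : i ≠ j) (a b : ℕ) :
    qedge i j a b = qedge j i b a := by
  funext k
  rcases eq_or_ne k i with rfl | hi
  · simp [qedge, h]
  · rcases eq_or_ne k j with rfl | hj
    · simp [qedge, h.symm]
    · simp [qedge, hi, hj]

lemma qsupport_qedge {n : ℕ} {i j : Fin n} (h : i ≠ j) {a b : ℕ} (ha : a ≠ 0) (hb : b ≠ 0) :
    qsupport (qedge i j a b) = {i, j} := by
  ext k
  simp only [qsupport, mem_filter, mem_univ, true_and, mem_insert, mem_singleton]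
  rcases eq_or_ne k i with rfl | hi
  · simp [qedge_self, ha]
  · rcases eq_or_ne k j with rfl | hj
    · simp [qedge_snd h, hb]
    · simp [qedge_other hi hj, hi, hj]

lemma mem_Qset_iff {n : ℕ} {x : Fin n → ℕ} :
    x ∈ Qset 2 n ↔ (∀ i, x i ≤ 2) ∧ (qsupport x).card = 2 := by
  simp only [Qset, mem_filter, mem_image, mem_univ, true_and, and_congr_left_iff]
  intro _
  constructor
  · rintro ⟨f, rfl⟩ i
    exact Nat.lt_succ_iff.mp (f i).isLt
  · intro h
    exact ⟨fun i => ⟨x i, Nat.lt_succ_of_le (h i)⟩, rfl⟩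

lemma eq_qedge_of_supp {n : ℕ} {x : Fin n → ℕ} {i j : Fin n} (hij : i ≠ j)
    (h : qsupport x = {i, j}) : x = qedge i j (x i) (x j) := by
  funext k
  rcases eq_or_ne k i with rfl | hi
  · simp [qedge_self]
  · rcases eq_or_ne k j with rfl | hj
    · simp [qedge_snd hij]
    · have : k ∉ qsupport x := by
        rw [h]; simp [hi, hj]
      simp only [qsupport, mem_filter, mem_univ, true_and, not_not] at this
      rw [this, qedge_other hi hj]

/-- Structure of a member of `Qset 2 n`. -/
lemma exists_qedge {n : ℕ} {x : Fin n → ℕ} (hx : x ∈ Qset 2 n) :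
    ∃ i j a b, i ≠ j ∧ (a = 1 ∨ a = 2) ∧ (b = 1 ∨ b = 2) ∧ x = qedge i j a b := by
  obtain ⟨hle, hcard⟩ := mem_Qset_iff.mp hx
  obtain ⟨i, j, hij, hsupp⟩ := Finset.card_eq_two.mp hcard
  have hi : x i ≠ 0 := by
    have : i ∈ qsupport x := by rw [hsupp]; simp
    simpa [qsupport] using this
  have hj : x j ≠ 0 := by
    have : j ∈ qsupport x := by rw [hsupp]; simp
    simpa [qsupport] using this
  refine ⟨i, j, x i, x j, hij, ?_, ?_, eq_qedge_of_supp hij hsupp⟩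
  · have := hle i; omega
  · have := hle j; omega

lemma qedge_mem_Qset {n : ℕ} {i j : Fin n} (hij : i ≠ j) {a b : ℕ}
    (ha : a = 1 ∨ a = 2) (hb : b = 1 ∨ b = 2) : qedge i j a b ∈ Qset 2 n := by
  rw [mem_Qset_iff]
  constructor
  · intro k
    rcases eq_or_ne k i with rfl | hi
    · rw [qedge_self]; omega
    · rcases eq_or_ne k j with rfl | hj
      · rw [qedge_snd hij]; omega
      · rw [qedge_other hi hj]; omega
  · rw [qsupport_qedge hij (by omega) (by omega)]
    exact Finset.card_pair hij

/-- Injectivity of the qedge encoding. -/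
lemma qedge_eq_iff {n : ℕ} {i j i' j' : Fin n} {a b a' b' : ℕ} (hij : i ≠ j) (hij' : i' ≠ j')
    (ha : a ≠ 0) (hb : b ≠ 0) (ha' : a' ≠ 0) (hb' : b' ≠ 0)
    (heq : qedge i j a b = qedge i' j' a' b') :
    (i = i' ∧ j = j' ∧ a = a' ∧ b = b') ∨ (i = j' ∧ j = i' ∧ a = b' ∧ b = a') := by
  have hs : ({i, j} : Finset (Fin n)) = {i', j'} := by
    rw [← qsupport_qedge hij ha hb, heq, qsupport_qedge hij' ha' hb']
  have hmem : i = i' ∨ i = j' := by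
    have : i ∈ ({i', j'} : Finset (Fin n)) := by rw [← hs]; simp
    simpa using this
  rcases hmem with rfl | rfl
  · left
    have hjj : j = j' := by
      have : j ∈ ({i, j'} : Finset (Fin n)) := by rw [← hs]; simp
      simp only [mem_insert, mem_singleton] at this
      tauto
    subst hjj
    refine ⟨rfl, rfl, ?_, ?_⟩
    · have := congrFun heq i; simpa [qedge_self] using this
    · have := congrFun heq j; simpa [qedge_snd hij] using this
  · right
    have hjj : j = i' := by
      have : j ∈ ({i', i} : Finset (Fin n)) := by rw [← hs]; simp
      simp only [mem_insert, mem_singleton] at this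
      rcases this with h | h
      · exact h
      · exact absurd h.symm hij
    subst hjj
    refine ⟨rfl, rfl, ?_, ?_⟩
    · have := congrFun heq i
      rw [qedge_self, qedge_snd hij'] at this; exact this
    · have := congrFun heq j
      rw [qedge_snd hij, qedge_self] at this; exact this

lemma sq_mod_four (k : ℕ) : k^2 % 4 = 0 ∨ k^2 % 4 = 1 := by
  obtain ⟨m, rfl | rfl⟩ := Nat.even_or_odd' k
  · left
    have h : (2*m)^2 = 4*m^2 := by ring
    omega
  · right
    have h : (2*m+1)^2 = 4*(m^2+m)+1 := by ring
    omega

lemma card_filter_pair {β : Type} [DecidableEq β] (P : β → Prop) [DecidablePred P] (x y : β)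
    (hxy : x ≠ y) :
    (({x,y} : Finset β).filter P).card
      = (if P x then 1 else 0) + (if P y then 1 else 0) := by
  rw [Finset.filter_insert, Finset.filter_singleton]
  split_ifs with h1 h2 h2
  · rw [Finset.card_insert_of_notMem (by simp [hxy]), Finset.card_singleton]
  · simp
  · simp
  · simp

/-- The count of "touched" pairs is at most twice the count of pairs with first
coordinate in `{u,v}`, minus 2. -/
lemma half_bound {α : Type} [DecidableEq α] (u v : α) (hne : u ≠ v) (X : Finset (α × α))
    (hsym : ∀ p ∈ X, (p.2, p.1) ∈ X) (huv : (u,v) ∈ X) :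
    (X.filter (fun p => p.1 = u ∨ p.1 = v ∨ p.2 = u ∨ p.2 = v)).card + 2
      ≤ 2 * (X.filter (fun p => p.1 = u ∨ p.1 = v)).card := by
  set X1 := X.filter (fun p => p.1 = u ∨ p.1 = v) with hX1
  set full := X.filter (fun p => p.1 = u ∨ p.1 = v ∨ p.2 = u ∨ p.2 = v) with hfull
  have hsplit : full.card = (full.filter (fun p => p.1 = u ∨ p.1 = v)).card
      + (full.filter (fun p => ¬(p.1 = u ∨ p.1 = v))).card :=
    (Finset.card_filter_add_card_filter_not _).symm
  have heq1' : full.filter (fun p => p.1 = u ∨ p.1 = v) = X1 := by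
    rw [hfull, hX1, Finset.filter_filter]
    apply Finset.filter_congr
    intro p _
    simp only [and_iff_right_iff_imp]  -- might not be right form
    tauto
  rw [heq1'] at hsplit
  have hswap : (full.filter (fun p => ¬(p.1 = u ∨ p.1 = v))).card
      ≤ (X1.filter (fun p => p.2 ≠ u ∧ p.2 ≠ v)).card := by
    apply Finset.card_le_card_of_injOn Prod.swap
    · intro p hp
      simp only [hfull, hX1, Finset.mem_coe, Finset.mem_filter, not_or, Prod.fst_swap,
        Prod.snd_swap] at hp ⊢
      obtain ⟨⟨hpX, hpt⟩, hp1, hp2⟩ := hp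
      refine ⟨⟨hsym _ hpX, ?_⟩, hp1, hp2⟩
      tauto
    · intro p _ q _ h
      exact Prod.swap_injective h
  have hins : (X1.filter (fun p => p.2 ≠ u ∧ p.2 ≠ v)).card + 2 ≤ X1.card := by
    have hvu : (v, u) ∉ X1.filter (fun p => p.2 ≠ u ∧ p.2 ≠ v) := by
      simp
    have huv2 : (u, v) ∉ insert (v,u) (X1.filter (fun p => p.2 ≠ u ∧ p.2 ≠ v)) := by
      simp only [Finset.mem_insert, Finset.mem_filter, Prod.mk.injEq, not_or]
      refine ⟨fun h => hne h.1, by simp⟩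
    have hsub : insert (u,v) (insert (v,u) (X1.filter (fun p => p.2 ≠ u ∧ p.2 ≠ v))) ⊆ X1 := by
      intro p hp
      simp only [Finset.mem_insert] at hp
      rcases hp with rfl | rfl | hp
      · rw [hX1, Finset.mem_filter]; exact ⟨huv, Or.inl rfl⟩
      · rw [hX1, Finset.mem_filter]; exact ⟨hsym _ huv, Or.inr rfl⟩
      · exact (Finset.filter_subset _ _) hp
    have := Finset.card_le_card hsub
    rw [Finset.card_insert_of_notMem huv2, Finset.card_insert_of_notMem hvu] at this
    omega
  omega

lemma core_lemma {α : Type} [DecidableEq α] (k : ℕ) :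
    ∀ (V : Finset α) (U S : Finset (α × α)),
    V.card = k →
    (∀ p ∈ U, p.1 ∈ V ∧ p.2 ∈ V ∧ p.1 ≠ p.2) →
    (∀ p ∈ U, (p.2, p.1) ∈ U) →
    S ⊆ U →
    (∀ p ∈ S, (p.2, p.1) ∈ S) →
    (∀ a b c : α, (a,b) ∈ S → (a,c) ∈ S → (b,c) ∈ U → False) →
    U.card + S.card ≤ 4 * (k^2/4) := by
  induction k using Nat.strong_induction_on with
  | _ k IH =>
  intro V U S hcard hUV hUsym hSU hSsym htri
  rcases S.eq_empty_or_nonempty with rfl | ⟨⟨u,v⟩, huvS⟩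
  · -- S empty
    have hsub : U ⊆ V.offDiag := by
      intro p hp
      obtain ⟨h1, h2, h3⟩ := hUV p hp
      exact Finset.mem_offDiag.mpr ⟨h1, h2, h3⟩
    have h1 : U.card ≤ k*k - k := by
      have := Finset.card_le_card hsub
      rwa [Finset.offDiag_card, hcard] at this
    have h2 : k ≤ k * k := by
      rcases Nat.eq_zero_or_pos k with rfl | hk
      · simp
      · exact Nat.le_mul_of_pos_left k hk
    have h0 : k = 0 → U.card = 0 := by
      intro hk
      have : V = ∅ := Finset.card_eq_zero.mp (hcard.trans hk)
      subst this
      simp only [Finset.offDiag_empty, Finset.subset_empty] at hsub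
      simp [hsub]
    have hm := sq_mod_four k
    have hpow : k^2 = k*k := by ring
    rw [hpow] at hm ⊢
    rcases Nat.eq_zero_or_pos k with rfl | hk
    · simp [h0 rfl]
    · obtain ⟨K, hK⟩ : ∃ K, k*k = K := ⟨_, rfl⟩
      rw [hK] at hm h1 h2 ⊢
      rw [Finset.card_empty]
      omega
  · -- S nonempty, pick (u,v) ∈ S
    have huvU := hSU huvS
    obtain ⟨hu, hv, hne⟩ := hUV _ huvU
    simp only at hu hv hne
    set V' : Finset α := (V.erase u).erase v with hV'
    set U' : Finset (α × α) :=
      U.filter (fun p => ¬(p.1 = u ∨ p.1 = v ∨ p.2 = u ∨ p.2 = v)) with hU'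
    set S' : Finset (α × α) :=
      S.filter (fun p => ¬(p.1 = u ∨ p.1 = v ∨ p.2 = u ∨ p.2 = v)) with hS'
    have hk2 : 2 ≤ k := by
      rw [← hcard]
      have hss : ({u, v} : Finset α) ⊆ V := by
        intro x hx; simp only [mem_insert, mem_singleton] at hx
        rcases hx with rfl | rfl <;> assumption
      calc 2 = ({u,v} : Finset α).card := (Finset.card_pair hne).symm
        _ ≤ V.card := Finset.card_le_card hss
    have hV'card : V'.card = k - 2 := by
      rw [hV', Finset.card_erase_of_mem (Finset.mem_erase.mpr ⟨Ne.symm hne, hv⟩),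
        Finset.card_erase_of_mem hu, hcard]
      omega
    have hmemV' : ∀ x, x ∈ V ∧ x ≠ u ∧ x ≠ v → x ∈ V' := by
      intro x ⟨h1, h2, h3⟩
      exact Finset.mem_erase.mpr ⟨h3, Finset.mem_erase.mpr ⟨h2, h1⟩⟩
    have hIH : U'.card + S'.card ≤ 4 * ((k-2)^2/4) := by
      refine IH (k-2) (by omega) V' U' S' hV'card ?_ ?_ ?_ ?_ ?_
      · intro p hp
        rw [hU', Finset.mem_filter] at hp
        obtain ⟨hpU, hpt⟩ := hp
        obtain ⟨h1, h2, h3⟩ := hUV p hpU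
        simp only [not_or] at hpt
        obtain ⟨h4, h5, h6, h7⟩ := hpt
        exact ⟨hmemV' _ ⟨h1, h4, h5⟩, hmemV' _ ⟨h2, h6, h7⟩, h3⟩
      · intro p hp
        rw [hU', Finset.mem_filter] at hp ⊢
        refine ⟨hUsym _ hp.1, ?_⟩
        have := hp.2
        simp only [not_or] at this ⊢
        tauto
      · exact Finset.filter_subset_filter _ hSU
      · intro p hp
        rw [hS', Finset.mem_filter] at hp ⊢
        refine ⟨hSsym _ hp.1, ?_⟩
        have := hp.2
        simp only [not_or] at this ⊢
        tauto
      · intro a b c h1 h2 h3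
        rw [hS', Finset.mem_filter] at h1 h2
        rw [hU', Finset.mem_filter] at h3
        exact htri a b c h1.1 h2.1 h3.1
    set RU : Finset (α × α) :=
      U.filter (fun p => p.1 = u ∨ p.1 = v ∨ p.2 = u ∨ p.2 = v) with hRU
    set RS : Finset (α × α) :=
      S.filter (fun p => p.1 = u ∨ p.1 = v ∨ p.2 = u ∨ p.2 = v) with hRS
    have hUsplit : U.card = RU.card + U'.card := by
      rw [hU', hRU]
      exact (Finset.card_filter_add_card_filter_not _).symm
    have hSsplit : S.card = RS.card + S'.card := by
      rw [hS', hRS]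
      exact (Finset.card_filter_add_card_filter_not _).symm
    -- bound the removed part
    have hbU : RU.card + 2 ≤ 2 * (U.filter (fun p => p.1 = u ∨ p.1 = v)).card :=
      half_bound u v hne U hUsym huvU
    have hbS : RS.card + 2 ≤ 2 * (S.filter (fun p => p.1 = u ∨ p.1 = v)).card :=
      half_bound u v hne S hSsym huvS
    have hfib : (U.filter (fun p => p.1 = u ∨ p.1 = v)).card
        + (S.filter (fun p => p.1 = u ∨ p.1 = v)).card ≤ 2 * k := by
      have hmapU : ∀ p ∈ U.filter (fun p => p.1 = u ∨ p.1 = v), p.2 ∈ V :=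
        fun p hp => (hUV p (Finset.mem_filter.mp hp).1).2.1
      have hmapS : ∀ p ∈ S.filter (fun p => p.1 = u ∨ p.1 = v), p.2 ∈ V :=
        fun p hp => (hUV p (hSU (Finset.mem_filter.mp hp).1)).2.1
      rw [Finset.card_eq_sum_card_fiberwise hmapU, Finset.card_eq_sum_card_fiberwise hmapS,
        ← Finset.sum_add_distrib]
      have key : ∀ w ∈ V,
          ((U.filter (fun p => p.1 = u ∨ p.1 = v)).filter (fun p => p.2 = w)).card
          + ((S.filter (fun p => p.1 = u ∨ p.1 = v)).filter (fun p => p.2 = w)).card ≤ 2 := by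
        intro w _
        have hpair : ((u:α), w) ≠ ((v:α), w) :=
          fun h => hne (congrArg Prod.fst h)
        have hsubU : (U.filter (fun p => p.1 = u ∨ p.1 = v)).filter (fun p => p.2 = w)
            ⊆ ({(u,w),(v,w)} : Finset (α × α)).filter (· ∈ U) := by
          intro p hp
          simp only [Finset.mem_filter] at hp
          obtain ⟨⟨hpU, hp1⟩, hp2⟩ := hp
          simp only [Finset.mem_filter, Finset.mem_insert, Finset.mem_singleton, Prod.ext_iff]
          exact ⟨by tauto, hpU⟩
        have hsubS : (S.filter (fun p => p.1 = u ∨ p.1 = v)).filter (fun p => p.2 = w)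
            ⊆ ({(u,w),(v,w)} : Finset (α × α)).filter (· ∈ S) := by
          intro p hp
          simp only [Finset.mem_filter] at hp
          obtain ⟨⟨hpS, hp1⟩, hp2⟩ := hp
          simp only [Finset.mem_filter, Finset.mem_insert, Finset.mem_singleton, Prod.ext_iff]
          exact ⟨by tauto, hpS⟩
        have hcU := (Finset.card_le_card hsubU).trans_eq
          (card_filter_pair (· ∈ U) (u,w) (v,w) hpair)
        have hcS := (Finset.card_le_card hsubS).trans_eq
          (card_filter_pair (· ∈ S) (u,w) (v,w) hpair)
        have hf1 : (u,w) ∈ S → (v,w) ∈ U → False := fun h1 h2 => htri u v w huvS h1 h2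
        have hf2 : (v,w) ∈ S → (u,w) ∈ U → False := fun h1 h2 => htri v u w (hSsym _ huvS) h1 h2
        have hg1 : (u,w) ∈ S → (u,w) ∈ U := fun h => hSU h
        have hg2 : (v,w) ∈ S → (v,w) ∈ U := fun h => hSU h
        split_ifs at hcU hcS <;>
          first
            | omega
            | (exfalso; tauto)
      calc ∑ w ∈ V, (((U.filter (fun p => p.1 = u ∨ p.1 = v)).filter (fun p => p.2 = w)).card
              + ((S.filter (fun p => p.1 = u ∨ p.1 = v)).filter (fun p => p.2 = w)).card)
          ≤ ∑ _w ∈ V, 2 := Finset.sum_le_sum key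
        _ = 2 * k := by rw [Finset.sum_const, hcard, smul_eq_mul, mul_comm]
    have harith : 4 * ((k-2)^2/4) + (4*k - 4) ≤ 4 * (k^2/4) := by
      obtain ⟨m, hm⟩ : ∃ m, k = m + 2 := ⟨k - 2, by omega⟩
      subst hm
      have e1 : (m+2)^2 = m^2 + 4*m + 4 := by ring
      have e2 : (m+2) - 2 = m := by omega
      rw [e1, e2]
      obtain ⟨K, hK⟩ : ∃ K, m^2 = K := ⟨_, rfl⟩
      rw [hK]
      omega
    omega

/-- `H` is an `s`-copy of the graph `F`. -/
def IsSCopy {α : Type} [Fintype α] (s : ℕ) (F : SimpleGraph α) {n : ℕ}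
    (H : Finset (Fin n → ℕ)) : Prop :=
  ∃ ι : α → Fin n, Function.Injective ι ∧
    (∀ u v : α, F.Adj u v ↔ ∃ x ∈ H, qsupport x = {ι u, ι v}) ∧
    H.card = Nat.card F.edgeSet ∧
    ∀ x ∈ H, ∀ y ∈ H, x ≠ y → ∀ i, x i ≠ 0 → y i ≠ 0 → s ≤ x i + y i

/-- `H` contains an `s`-copy of `F`. -/
def ContainsSCopy {α : Type} [Fintype α] (s : ℕ) (F : SimpleGraph α) {n : ℕ}
    (H : Finset (Fin n → ℕ)) : Prop :=
  ∃ H' ⊆ H, IsSCopy s F H'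

lemma gadget {n : ℕ} {H : Finset (Fin n → ℕ)} {a b c : Fin n} {v1 v2 v3 v4 v5 v6 : ℕ}
    (hab : a ≠ b) (hac : a ≠ c) (hbc : b ≠ c)
    (hv1 : v1 = 1 ∨ v1 = 2) (hv2 : v2 = 1 ∨ v2 = 2) (hv3 : v3 = 1 ∨ v3 = 2)
    (hv4 : v4 = 1 ∨ v4 = 2) (hv5 : v5 = 1 ∨ v5 = 2) (hv6 : v6 = 1 ∨ v6 = 2)
    (h1 : qedge a b v1 v2 ∈ H) (h2 : qedge a c v3 v4 ∈ H) (h3 : qedge b c v5 v6 ∈ H)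
    (s1 : 3 ≤ v1 + v3) (s2 : 3 ≤ v2 + v5) (s3 : 3 ≤ v4 + v6) :
    ContainsSCopy 3 (⊤ : SimpleGraph (Fin 3)) H := by
  set x : Fin n → ℕ := qedge a b v1 v2 with hx
  set y : Fin n → ℕ := qedge a c v3 v4 with hy
  set z : Fin n → ℕ := qedge b c v5 v6 with hz
  have hsupx : qsupport x = {a, b} := qsupport_qedge hab (by omega) (by omega)
  have hsupy : qsupport y = {a, c} := qsupport_qedge hac (by omega) (by omega)
  have hsupz : qsupport z = {b, c} := qsupport_qedge hbc (by omega) (by omega)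
  have hxy : x ≠ y := by
    intro h
    have := congrFun h b
    rw [hx, hy, qedge_snd hab, qedge_other hab.symm hbc] at this
    omega
  have hxz : x ≠ z := by
    intro h
    have := congrFun h a
    rw [hx, hz, qedge_self, qedge_other hab hac] at this
    omega
  have hyz : y ≠ z := by
    intro h
    have := congrFun h a
    rw [hy, hz, qedge_self, qedge_other hab hac] at this
    omega
  set H' : Finset (Fin n → ℕ) := {x, y, z} with hH'
  have hsub : H' ⊆ H := by
    rw [hH']
    intro w hw
    simp only [Finset.mem_insert, Finset.mem_singleton] at hw
    rcases hw with rfl | rfl | rfl <;> assumption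
  have hcard3 : H'.card = 3 := by
    rw [hH', Finset.card_insert_of_notMem (by simp [hxy, hxz]),
      Finset.card_insert_of_notMem (by simp [hyz]), Finset.card_singleton]
  set ι : Fin 3 → Fin n := fun t => if t = 0 then a else if t = 1 then b else c with hι
  have hι0 : ι 0 = a := rfl
  have hι1 : ι 1 = b := rfl
  have hι2 : ι 2 = c := rfl
  have hmem2 : ∀ w ∈ H', (qsupport w).card = 2 := by
    intro w hw
    rw [hH'] at hw
    simp only [Finset.mem_insert, Finset.mem_singleton] at hw
    rcases hw with rfl | rfl | rfl
    · rw [hsupx]; exact Finset.card_pair hab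
    · rw [hsupy]; exact Finset.card_pair hac
    · rw [hsupz]; exact Finset.card_pair hbc
  have hnz : ∀ (p q : Fin n) (w1 w2 : ℕ) (i : Fin n), qedge p q w1 w2 i ≠ 0 → i = p ∨ i = q := by
    intro p q w1 w2 i hne0
    by_contra hcon
    push_neg at hcon
    exact hne0 (qedge_other hcon.1 hcon.2 _ _)
  refine ⟨H', hsub, ι, ?_, ?_, ?_, ?_⟩
  · -- injective
    intro s t hst
    fin_cases s <;> fin_cases t <;> simp only [hι0, hι1, hι2] at hst <;>
      first
        | rfl
        | (exact absurd hst (by assumption))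
        | (exact absurd hst.symm (by assumption))
  · -- adjacency
    have hdiag : ∀ u : Fin 3, ¬ ∃ w ∈ H', qsupport w = {ι u, ι u} := by
      rintro u ⟨w, hw, hsupp⟩
      have h2 := hmem2 w hw
      rw [hsupp] at h2
      simp at h2
    intro u v
    fin_cases u <;> fin_cases v
    · exact iff_of_false (by simp) (hdiag 0)
    · refine iff_of_true (by simp) ⟨x, by simp [hH'], by exact hsupx⟩
    · refine iff_of_true (by simp) ⟨y, by simp [hH'], by exact hsupy⟩
    · refine iff_of_true (by simp) ⟨x, by simp [hH'], by rw [Finset.pair_comm]; exact hsupx⟩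
    · exact iff_of_false (by simp) (hdiag 1)
    · refine iff_of_true (by simp) ⟨z, by simp [hH'], by exact hsupz⟩
    · refine iff_of_true (by simp) ⟨y, by simp [hH'], by rw [Finset.pair_comm]; exact hsupy⟩
    · refine iff_of_true (by simp) ⟨z, by simp [hH'], by rw [Finset.pair_comm]; exact hsupz⟩
    · exact iff_of_false (by simp) (hdiag 2)
  · -- card
    rw [hcard3]
    rw [Nat.card_eq_fintype_card]
    decide
  · -- the s-condition
    have key_xy : ∀ i, x i ≠ 0 → y i ≠ 0 → x i + y i = v1 + v3 := by
      intro i hxi hyi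
      rcases hnz a b v1 v2 i hxi with rfl | rfl
      · rw [hx, hy, qedge_self, qedge_self]
      · rcases hnz a c v3 v4 _ hyi with h | h
        · exact absurd h.symm hab
        · exact absurd h hbc
    have key_xz : ∀ i, x i ≠ 0 → z i ≠ 0 → x i + z i = v2 + v5 := by
      intro i hxi hzi
      rcases hnz a b v1 v2 i hxi with rfl | rfl
      · rcases hnz b c v5 v6 _ hzi with h | h
        · exact absurd h hab
        · exact absurd h hac
      · rw [hx, hz, qedge_snd hab, qedge_self]
    have key_yz : ∀ i, y i ≠ 0 → z i ≠ 0 → y i + z i = v4 + v6 := by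
      intro i hyi hzi
      rcases hnz a c v3 v4 i hyi with rfl | rfl
      · rcases hnz b c v5 v6 _ hzi with h | h
        · exact absurd h hab
        · exact absurd h hac
      · rw [hy, hz, qedge_snd hac, qedge_snd hbc]
    intro w1 hw1 w2 hw2 hne i hi1 hi2
    rw [hH'] at hw1 hw2
    simp only [Finset.mem_insert, Finset.mem_singleton] at hw1 hw2
    rcases hw1 with rfl | rfl | rfl <;> rcases hw2 with rfl | rfl | rfl
    · exact absurd rfl hne
    · have := key_xy i hi1 hi2; omega
    · have := key_xz i hi1 hi2; omega
    · have := key_xy i hi2 hi1; omega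
    · exact absurd rfl hne
    · have := key_yz i hi1 hi2; omega
    · have := key_xz i hi2 hi1; omega
    · have := key_yz i hi2 hi1; omega
    · exact absurd rfl hne

theorem upper_bound {n : ℕ} (H : Finset (Fin n → ℕ)) (hH : H ⊆ Qset 2 n)
    (hfree : ¬ ContainsSCopy 3 (⊤ : SimpleGraph (Fin 3)) H) :
    H.card ≤ 4 * (n^2/4) := by
  classical
  set P : Finset (Fin n × Fin n) := Finset.univ.offDiag with hP
  have hPmem : ∀ p : Fin n × Fin n, p ∈ P ↔ p.1 ≠ p.2 := by
    intro p
    rw [hP, Finset.mem_offDiag]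
    simp
  set A : ℕ × ℕ → Finset (Fin n × Fin n) :=
    fun t => P.filter (fun p => qedge p.1 p.2 t.1 t.2 ∈ H) with hA
  set types : Finset (ℕ × ℕ) := {(1,1),(1,2),(2,1),(2,2)} with htypes
  set D : Finset ((Fin n × Fin n) × (ℕ × ℕ)) :=
    (P ×ˢ types).filter (fun q => qedge q.1.1 q.1.2 q.2.1 q.2.2 ∈ H) with hD
  -- step 1 : 2 * H.card ≤ D.card
  have h2H : 2 * H.card ≤ D.card := by
    have hcard2 : (H ×ˢ (Finset.univ : Finset Bool)).card = 2 * H.card := by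
      rw [Finset.card_product]
      simp [mul_comm]
    rw [← hcard2]
    apply Finset.card_le_card_of_surjOn
      (fun q => (qedge q.1.1 q.1.2 q.2.1 q.2.2, decide (q.1.1 < q.1.2)))
    rintro ⟨x, bb⟩ hmem
    simp only [Finset.coe_product, Set.mem_prod, Finset.mem_coe] at hmem
    obtain ⟨hx, -⟩ := hmem
    obtain ⟨i, j, a, b, hij, ha, hb, rfl⟩ := exists_qedge (hH hx)
    have hmemD : ∀ (p : Fin n × Fin n) (t : ℕ × ℕ), p.1 ≠ p.2 → t ∈ types →
        qedge p.1 p.2 t.1 t.2 ∈ H → (p, t) ∈ D := by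
      intro p t h1 h2 h3
      rw [hD, Finset.mem_filter, Finset.mem_product]
      exact ⟨⟨(hPmem p).mpr h1, h2⟩, h3⟩
    have htype1 : ((a, b) : ℕ × ℕ) ∈ types := by
      rw [htypes]; rcases ha with rfl | rfl <;> rcases hb with rfl | rfl <;> decide
    have htype2 : ((b, a) : ℕ × ℕ) ∈ types := by
      rw [htypes]; rcases ha with rfl | rfl <;> rcases hb with rfl | rfl <;> decide
    rcases hij.lt_or_gt with hlt | hlt
    · by_cases hbb : bb = true
      · refine ⟨((i,j),(a,b)), hmemD (i,j) (a,b) hij htype1 hx, ?_⟩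
        simp [hlt, hbb]
      · refine ⟨((j,i),(b,a)), hmemD (j,i) (b,a) hij.symm htype2 ?_, ?_⟩
        · rw [← qedge_comm hij]; exact hx
        · have : ¬ (j < i) := not_lt_of_gt hlt
          simp [this, Bool.eq_false_iff.mpr hbb, ← qedge_comm hij]
    · by_cases hbb : bb = true
      · refine ⟨((j,i),(b,a)), hmemD (j,i) (b,a) hij.symm htype2 ?_, ?_⟩
        · rw [← qedge_comm hij]; exact hx
        · simp [hlt, hbb, ← qedge_comm hij]
      · refine ⟨((i,j),(a,b)), hmemD (i,j) (a,b) hij htype1 hx, ?_⟩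
        have : ¬ (i < j) := not_lt_of_gt hlt
        simp [this, Bool.eq_false_iff.mpr hbb]
  -- step 2 : D.card as a sum over the four types
  have hDsum : D.card = (A (1,1)).card + (A (1,2)).card + (A (2,1)).card + (A (2,2)).card := by
    have hmap : ∀ q ∈ D, q.2 ∈ types := by
      intro q hq
      rw [hD, Finset.mem_filter, Finset.mem_product] at hq
      exact hq.1.2
    rw [Finset.card_eq_sum_card_fiberwise hmap]
    have hfib : ∀ t ∈ types, (D.filter (fun q => q.2 = t)).card = (A t).card := by
      intro t ht
      apply Finset.card_bij (fun q _ => q.1)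
      · intro q hq
        simp only [Finset.mem_filter] at hq
        obtain ⟨hqD, hqt⟩ := hq
        rw [hD, Finset.mem_filter, Finset.mem_product] at hqD
        rw [hA, Finset.mem_filter]
        exact ⟨hqD.1.1, by rw [← hqt]; exact hqD.2⟩
      · intro q1 hq1 q2 hq2 heq
        simp only [Finset.mem_filter] at hq1 hq2
        exact Prod.ext heq (hq1.2.trans hq2.2.symm)
      · intro p hp
        rw [hA, Finset.mem_filter] at hp
        refine ⟨(p, t), Finset.mem_filter.mpr ⟨?_, rfl⟩, rfl⟩
        rw [hD, Finset.mem_filter, Finset.mem_product]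
        exact ⟨⟨hp.1, ht⟩, hp.2⟩

    rw [Finset.sum_congr rfl hfib]
    rw [htypes]
    rw [Finset.sum_insert (by decide), Finset.sum_insert (by decide),
      Finset.sum_insert (by decide), Finset.sum_singleton]
    ring
  -- the four graphs
  set U1 : Finset (Fin n × Fin n) :=
    P.filter (fun p => qedge p.1 p.2 1 2 ∈ H ∨ qedge p.1 p.2 2 1 ∈ H) with hU1
  set S1 : Finset (Fin n × Fin n) :=
    P.filter (fun p => qedge p.1 p.2 1 2 ∈ H ∧ qedge p.1 p.2 2 1 ∈ H) with hS1
  set U2 : Finset (Fin n × Fin n) :=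
    P.filter (fun p => qedge p.1 p.2 1 1 ∈ H ∨ qedge p.1 p.2 2 2 ∈ H) with hU2
  set S2 : Finset (Fin n × Fin n) :=
    P.filter (fun p => qedge p.1 p.2 2 2 ∈ H) with hS2
  have hsum1 : (A (1,2)).card + (A (2,1)).card = U1.card + S1.card := by
    rw [hU1, hS1, Finset.filter_or, Finset.filter_and]
    exact (Finset.card_union_add_card_inter _ _).symm
  have hsum2 : (A (1,1)).card + (A (2,2)).card ≤ U2.card + S2.card := by
    have h1 : (A (1,1)) ∪ (A (2,2)) = U2 := by
      rw [hU2, Finset.filter_or]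
    have h2 : (A (1,1)) ∩ (A (2,2)) ⊆ S2 := by
      intro p hp
      rw [Finset.mem_inter] at hp
      rw [hS2, Finset.mem_filter]
      rw [hA] at hp
      simp only [Finset.mem_filter] at hp
      exact ⟨hp.1.1, hp.2.2⟩
    calc (A (1,1)).card + (A (2,2)).card
        = ((A (1,1)) ∪ (A (2,2))).card + ((A (1,1)) ∩ (A (2,2))).card :=
          (Finset.card_union_add_card_inter _ _).symm
      _ ≤ U2.card + S2.card := by
          rw [h1]
          exact add_le_add_right (Finset.card_le_card h2) _
  -- hypotheses for core_lemma
  have hPne : ∀ (X : Finset (Fin n × Fin n)), X ⊆ P → ∀ p ∈ X,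
      p.1 ∈ (Finset.univ : Finset (Fin n)) ∧ p.2 ∈ (Finset.univ : Finset (Fin n)) ∧ p.1 ≠ p.2 :=
    fun X hX p hp => ⟨Finset.mem_univ _, Finset.mem_univ _, (hPmem p).mp (hX hp)⟩
  have hcore1 : U1.card + S1.card ≤ 4 * (n^2/4) := by
    have := core_lemma (α := Fin n) n Finset.univ U1 S1 (by simp) 
      (hPne U1 (Finset.filter_subset _ _))
      ?_ ?_ ?_ ?_
    · exact this
    · -- symmetry of U1
      rintro ⟨i, j⟩ hp
      rw [hU1, Finset.mem_filter] at hp ⊢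
      obtain ⟨hpP, hor⟩ := hp
      have hij : i ≠ j := (hPmem _).mp hpP
      refine ⟨(hPmem _).mpr hij.symm, ?_⟩
      simp only
      rw [qedge_comm hij.symm 1 2, qedge_comm hij.symm 2 1]
      tauto
    · -- S1 ⊆ U1
      rw [hU1, hS1]
      exact Finset.monotone_filter_right _ (fun a _ ha => Or.inl ha.1)
    · -- symmetry of S1
      rintro ⟨i, j⟩ hp
      rw [hS1, Finset.mem_filter] at hp ⊢
      obtain ⟨hpP, hand⟩ := hp
      have hij : i ≠ j := (hPmem _).mp hpP
      refine ⟨(hPmem _).mpr hij.symm, ?_⟩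
      simp only
      rw [qedge_comm hij.symm 1 2, qedge_comm hij.symm 2 1]
      tauto
    · -- triangle condition
      rintro a b c h1 h2 h3
      rw [hS1, Finset.mem_filter] at h1 h2
      rw [hU1, Finset.mem_filter] at h3
      have hab : a ≠ b := (hPmem _).mp h1.1
      have hac : a ≠ c := (hPmem _).mp h2.1
      have hbc : b ≠ c := (hPmem _).mp h3.1
      simp only at h1 h2 h3
      rcases h3.2 with hz | hz
      · exact hfree (gadget hab hac hbc (Or.inl rfl) (Or.inr rfl) (Or.inr rfl) (Or.inl rfl)
          (Or.inl rfl) (Or.inr rfl) h1.2.1 h2.2.2 hz (by norm_num) (by norm_num) (by norm_num))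
      · exact hfree (gadget hab hac hbc (Or.inr rfl) (Or.inl rfl) (Or.inl rfl) (Or.inr rfl)
          (Or.inr rfl) (Or.inl rfl) h1.2.2 h2.2.1 hz (by norm_num) (by norm_num) (by norm_num))
  have hcore2 : U2.card + S2.card ≤ 4 * (n^2/4) := by
    have := core_lemma (α := Fin n) n Finset.univ U2 S2 (by simp)
      (hPne U2 (Finset.filter_subset _ _))
      ?_ ?_ ?_ ?_
    · exact this
    · rintro ⟨i, j⟩ hp
      rw [hU2, Finset.mem_filter] at hp ⊢
      obtain ⟨hpP, hor⟩ := hp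
      have hij : i ≠ j := (hPmem _).mp hpP
      refine ⟨(hPmem _).mpr hij.symm, ?_⟩
      simp only
      rw [qedge_comm hij.symm 1 1, qedge_comm hij.symm 2 2]
      tauto
    · rw [hU2, hS2]
      exact Finset.monotone_filter_right _ (fun a _ ha => Or.inr ha)
    · rintro ⟨i, j⟩ hp
      rw [hS2, Finset.mem_filter] at hp ⊢
      obtain ⟨hpP, hmem⟩ := hp
      have hij : i ≠ j := (hPmem _).mp hpP
      refine ⟨(hPmem _).mpr hij.symm, ?_⟩
      simp only
      rw [qedge_comm hij.symm 2 2]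
      exact hmem
    · rintro a b c h1 h2 h3
      rw [hS2, Finset.mem_filter] at h1 h2
      rw [hU2, Finset.mem_filter] at h3
      have hab : a ≠ b := (hPmem _).mp h1.1
      have hac : a ≠ c := (hPmem _).mp h2.1
      have hbc : b ≠ c := (hPmem _).mp h3.1
      simp only at h1 h2 h3
      rcases h3.2 with hz | hz
      · exact hfree (gadget hab hac hbc (Or.inr rfl) (Or.inr rfl) (Or.inr rfl) (Or.inr rfl)
          (Or.inl rfl) (Or.inl rfl) h1.2 h2.2 hz (by norm_num) (by norm_num) (by norm_num))
      · exact hfree (gadget hab hac hbc (Or.inr rfl) (Or.inr rfl) (Or.inr rfl) (Or.inr rfl)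
          (Or.inr rfl) (Or.inr rfl) h1.2 h2.2 hz (by norm_num) (by norm_num) (by norm_num))
  omega

lemma half_arith (n : ℕ) : 4 * ((n/2) * (n - n/2)) = 4 * (n^2/4) := by
  obtain ⟨m, rfl | rfl⟩ := Nat.even_or_odd' n
  · have h1 : 2*m/2 = m := by omega
    have h2 : (2*m)^2 = 4*(m*m) := by ring
    rw [h1, h2]
    have h3 : 2*m - m = m := by omega
    rw [h3]
    obtain ⟨K, hK⟩ : ∃ K, m*m = K := ⟨_, rfl⟩
    rw [hK]
    omega
  · have h1 : (2*m+1)/2 = m := by omega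
    have h2 : (2*m+1)^2 = 4*(m*(m+1)) + 1 := by ring
    have h3 : (2*m+1) - m = m+1 := by omega
    rw [h1, h2, h3]
    obtain ⟨K, hK⟩ : ∃ K, m*(m+1) = K := ⟨_, rfl⟩
    rw [hK]
    omega

theorem lower_construction (n : ℕ) :
    ∃ H ⊆ Qset 2 n, ¬ ContainsSCopy 3 (⊤ : SimpleGraph (Fin 3)) H ∧ H.card = 4 * (n^2/4) := by
  classical
  set A : Finset (Fin n) := Finset.univ.filter (fun i => (i : ℕ) < n/2) with hA
  set B : Finset (Fin n) := Finset.univ.filter (fun i => ¬ (i : ℕ) < n/2) with hB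
  have hAmem : ∀ i : Fin n, i ∈ A ↔ (i : ℕ) < n/2 := by
    intro i; rw [hA, Finset.mem_filter]; simp
  have hBmem : ∀ i : Fin n, i ∈ B ↔ ¬ (i : ℕ) < n/2 := by
    intro i; rw [hB, Finset.mem_filter]; simp
  set types : Finset (ℕ × ℕ) := {(1,1),(1,2),(2,1),(2,2)} with htypes
  have htypesval : ∀ t ∈ types, (t.1 = 1 ∨ t.1 = 2) ∧ (t.2 = 1 ∨ t.2 = 2) := by
    intro t ht
    rw [htypes] at ht
    simp only [Finset.mem_insert, Finset.mem_singleton] at ht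
    rcases ht with rfl | rfl | rfl | rfl <;> simp
  set H0 : Finset (Fin n → ℕ) :=
    ((A ×ˢ B) ×ˢ types).image (fun q => qedge q.1.1 q.1.2 q.2.1 q.2.2) with hH0
  have hABne : ∀ i ∈ A, ∀ j ∈ B, i ≠ j := by
    intro i hi j hj h
    rw [hAmem] at hi
    rw [hBmem] at hj
    exact hj (h ▸ hi)
  refine ⟨H0, ?_, ?_, ?_⟩
  · -- subset of Qset
    intro x hx
    rw [hH0, Finset.mem_image] at hx
    obtain ⟨q, hq, rfl⟩ := hx
    rw [Finset.mem_product, Finset.mem_product] at hq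
    obtain ⟨⟨hqA, hqB⟩, hqt⟩ := hq
    obtain ⟨ht1, ht2⟩ := htypesval _ hqt
    exact qedge_mem_Qset (hABne _ hqA _ hqB) ht1 ht2
  · -- no copy
    rintro ⟨H', hsub, ι, hinj, hadj, hcard, hs⟩
    have key : ∀ u v : Fin 3, u ≠ v → (((ι u : Fin n) : ℕ) < n/2 ↔ ¬ ((ι v : Fin n) : ℕ) < n/2) := by
      intro u v huv
      have hAdj : (⊤ : SimpleGraph (Fin 3)).Adj u v := by simp [huv]
      obtain ⟨x, hxH', hsupp⟩ := (hadj u v).mp hAdj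
      have hxH0 := hsub hxH'
      rw [hH0, Finset.mem_image] at hxH0
      obtain ⟨q, hq, rfl⟩ := hxH0
      rw [Finset.mem_product, Finset.mem_product] at hq
      obtain ⟨⟨hqA, hqB⟩, hqt⟩ := hq
      obtain ⟨ht1, ht2⟩ := htypesval _ hqt
      have hne := hABne _ hqA _ hqB
      rw [qsupport_qedge hne (by omega) (by omega)] at hsupp
      have hu : ι u ∈ ({q.1.1, q.1.2} : Finset (Fin n)) := by rw [hsupp]; simp
      have hv : ι v ∈ ({q.1.1, q.1.2} : Finset (Fin n)) := by rw [hsupp]; simp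
      simp only [Finset.mem_insert, Finset.mem_singleton] at hu hv
      have hιne : ι u ≠ ι v := fun h => huv (hinj h)
      rw [hAmem] at hqA
      rw [hBmem] at hqB
      rcases hu with hu | hu <;> rcases hv with hv | hv
      · exact absurd (hu.trans hv.symm) hιne
      · rw [hu, hv]; tauto
      · rw [hu, hv]; tauto
      · exact absurd (hu.trans hv.symm) hιne
    have k1 := key 0 1 (by decide)
    have k2 := key 1 2 (by decide)
    have k3 := key 0 2 (by decide)
    tauto
  · -- cardinality
    have hinj2 : Set.InjOn (fun q : (Fin n × Fin n) × (ℕ × ℕ) => qedge q.1.1 q.1.2 q.2.1 q.2.2)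
        ↑((A ×ˢ B) ×ˢ types) := by
      rintro ⟨⟨i, j⟩, t1, t2⟩ hq ⟨⟨i', j'⟩, t1', t2'⟩ hq' heq
      rw [Finset.mem_coe, Finset.mem_product, Finset.mem_product] at hq hq'
      obtain ⟨⟨hiA, hjB⟩, ht⟩ := hq
      obtain ⟨⟨hiA', hjB'⟩, ht'⟩ := hq'
      obtain ⟨ht1, ht2⟩ := htypesval _ ht
      obtain ⟨ht1', ht2'⟩ := htypesval _ ht'
      simp only at ht1 ht2 ht1' ht2'
      have hij : i ≠ j := hABne _ hiA _ hjB
      have hij' : i' ≠ j' := hABne _ hiA' _ hjB'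
      have hz1 : t1 ≠ 0 := by omega
      have hz2 : t2 ≠ 0 := by omega
      have hz3 : t1' ≠ 0 := by omega
      have hz4 : t2' ≠ 0 := by omega
      rcases qedge_eq_iff hij hij' hz1 hz2 hz3 hz4 heq with
        ⟨h1, h2, h3, h4⟩ | ⟨h1, h2, h3, h4⟩
      · simp only [Prod.mk.injEq]
        exact ⟨⟨h1, h2⟩, h3, h4⟩
      · exfalso
        rw [hAmem] at hiA
        rw [hBmem] at hjB'
        rw [h1] at hiA
        exact hjB' hiA
    rw [hH0, Finset.card_image_of_injOn hinj2, Finset.card_product, Finset.card_product]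
    have hAcard : A.card = n/2 := by
      have himg : A.image Fin.val = Finset.range (n/2) := by
        ext m
        simp only [Finset.mem_image, Finset.mem_range]
        constructor
        · rintro ⟨i, hi, rfl⟩
          exact (hAmem i).mp hi
        · intro hm
          have hmn : m < n := lt_of_lt_of_le hm (Nat.div_le_self n 2)
          exact ⟨⟨m, hmn⟩, (hAmem _).mpr hm, rfl⟩
      have := Finset.card_image_of_injective A Fin.val_injective
      rw [himg, Finset.card_range] at this
      omega
    have hBcard : B.card = n - n/2 := by
      have hfull : A.card + B.card = n := by
        rw [hA, hB]
        rw [Finset.card_filter_add_card_filter_not]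
        simp
      omega
    have htcard : types.card = 4 := by rw [htypes]; decide
    rw [hAcard, hBcard, htcard, ← half_arith n]
    ring

/-- The ordinary Turán number `ex(n,F)`. -/
noncomputable def exNum {α : Type} [Fintype α] (n : ℕ) (F : SimpleGraph α) : ℕ :=
  sSup {m | ∃ G : SimpleGraph (Fin n),
    (¬ ∃ φ : F →g G, Function.Injective φ) ∧ m = Nat.card G.edgeSet}

/-- The Turán number `ex(n,F,q,s)`. -/
noncomputable def exQ {α : Type} [Fintype α] (n : ℕ) (F : SimpleGraph α) (q s : ℕ) : ℕ :=
  sSup {m | ∃ H ⊆ Qset q n, ¬ ContainsSCopy s F H ∧ m = H.card}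

/-- `ex(n, C₃, 2) = 4·⌊n²/4⌋` for all `n ≥ 2`. -/
theorem exQ_triangle_two (n : ℕ) (hn : 2 ≤ n) :
    exQ n (⊤ : SimpleGraph (Fin 3)) 2 3 = 4 * (n ^ 2 / 4) := by
  obtain ⟨H0, hsub, hfree, hcard⟩ := lower_construction n
  have hub : ∀ m ∈ {m | ∃ H ⊆ Qset 2 n, ¬ ContainsSCopy 3 (⊤ : SimpleGraph (Fin 3)) H ∧ m = H.card},
      m ≤ 4 * (n ^ 2 / 4) := by
    rintro m ⟨H, hH, hfr, rfl⟩
    exact upper_bound H hH hfr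
  have hmem : 4 * (n ^ 2 / 4) ∈
      {m | ∃ H ⊆ Qset 2 n, ¬ ContainsSCopy 3 (⊤ : SimpleGraph (Fin 3)) H ∧ m = H.card} :=
    ⟨H0, hsub, hfree, hcard.symm⟩
  unfold exQ
  apply le_antisymm
  · exact csSup_le ⟨_, hmem⟩ hub
  · exact le_csSup ⟨4 * (n ^ 2 / 4), hub⟩ hmem
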